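/- arXiv:2309.06170 — 3 statements merged into one kernel-verified Lean document; each statement's English description precedes it below -/
import Mathlib

section
/- Let Y ⊆ A^d be an affine variety over an algebraically closed field K of characteristic zero with vanishing ideal I(Y) = (f_1, …, f_m) ⊆ K[y_1, …, y_d], let f ∈ K[Y] be a nonconstant regular function, and let f̂ ∈ K[y_1, …, y_d] be any polynomial restricting to f on Y. Then the vanishing ideal of the suspension X = Susp(Y, f) ⊆ A^{d+2} equals (uv − f̂, f_1, …, f_m) ⊆ K[u, v, y_1, …, y_d]; equivalently, the ideal (uv − f̂, f_1, …, f_m) is a radical ideal of K[u, v, y_1, …, y_d]. -/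
open MvPolynomial

namespace ArzhZai

variable {K : Type} [Field K]

/-- A subset of affine space `𝔸^d` is an affine variety if it is the zero locus of an ideal
of polynomials. -/
def IsAffineVariety {d : ℕ} (V : Set (Fin d → K)) : Prop :=
  ∃ I : Ideal (MvPolynomial (Fin d) K), V = MvPolynomial.zeroLocus K I

/-- The differential of a polynomial `p` at a point `x`, as a linear form. -/
noncomputable def diffAt {d : ℕ} (x : Fin d → K) (p : MvPolynomial (Fin d) K) :
    (Fin d → K) →ₗ[K] K where
  toFun v := ∑ i, v i * eval x (pderiv i p)
  map_add' a b := by simp [add_mul, Finset.sum_add_distrib]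
  map_smul' c a := by simp [Finset.mul_sum, mul_assoc]

/-- The Zariski tangent space at a point `x` of the affine scheme (or variety) cut out by the
ideal `J`: the common kernel of the differentials at `x` of all elements of `J`. -/
noncomputable def tangentSpaceAt {d : ℕ} (J : Ideal (MvPolynomial (Fin d) K))
    (x : Fin d → K) : Submodule K (Fin d → K) :=
  ⨅ p ∈ J, LinearMap.ker (diffAt x p)

/-- The affine scheme (or variety) cut out by the ideal `J` is smooth at the closed point `x`
if the dimension of its Zariski tangent space at `x` equals its (Krull) dimension. -/
def SmoothAt {d : ℕ} (J : Ideal (MvPolynomial (Fin d) K)) (x : Fin d → K) : Prop :=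
  (Module.finrank K (tangentSpaceAt J x) : WithBot (WithTop ℕ)) =
    ringKrullDim (MvPolynomial (Fin d) K ⧸ J)

/-- The suspension `Susp(V, f) = {uv = f(y)} ⊆ 𝔸² × V`, with coordinates
`(u, v, y) = (x 0, x 1, (x 2, …))`. -/
def Susp {d : ℕ} (V : Set (Fin d → K)) (f : MvPolynomial (Fin d) K) :
    Set (Fin (d + 2) → K) :=
  {x | (fun i => x i.succ.succ) ∈ V ∧ x 0 * x 1 = eval (fun i => x i.succ.succ) f}

/-- `f` is a nonconstant regular function on `V` (i.e. nonconstant in `K[V]`). -/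
def NonconstOn {d : ℕ} (V : Set (Fin d → K)) (f : MvPolynomial (Fin d) K) : Prop :=
  ∃ x ∈ V, ∃ y ∈ V, eval x f ≠ eval y f

/-- `V` is a homogeneous variety: the group of (biregular) automorphisms of `V`
acts transitively on `V`. -/
def IsHomogeneousVariety {d : ℕ} (V : Set (Fin d → K)) : Prop :=
  ∀ x ∈ V, ∀ y ∈ V, ∃ F G : Fin d → MvPolynomial (Fin d) K,
    (∀ z ∈ V, (fun i => eval z (F i)) ∈ V) ∧
    (∀ z ∈ V, (fun i => eval z (G i)) ∈ V) ∧
    (∀ z ∈ V, (fun i => eval (fun j => eval z (F j)) (G i)) = z) ∧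
    (∀ z ∈ V, (fun i => eval (fun j => eval z (G j)) (F i)) = z) ∧
    (fun i => eval x (F i)) = y

/-- The map `(t, x) ↦ φ_t(x)` of a polynomial family of maps, where the
polynomials `A i` use variable `0` for `t` and variables `i.succ` for `x`. -/
noncomputable def gaOrbitMap {d : ℕ} (A : Fin d → MvPolynomial (Fin (d + 1)) K) (t : K)
    (x : Fin d → K) : Fin d → K :=
  fun i => eval (Fin.cons t x) (A i)

/-- A regular action of the additive group `𝔾ₐ = (K, +)` on `V`, given polynomially. -/
def IsGaAction {d : ℕ} (V : Set (Fin d → K))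
    (A : Fin d → MvPolynomial (Fin (d + 1)) K) : Prop :=
  (∀ t : K, ∀ x ∈ V, gaOrbitMap A t x ∈ V) ∧
  (∀ x ∈ V, gaOrbitMap A 0 x = x) ∧
  (∀ s t : K, ∀ x ∈ V, gaOrbitMap A (s + t) x = gaOrbitMap A s (gaOrbitMap A t x))

/-- `V` is flexible: at every smooth point `x`, the tangent space to `V` is generated by
the tangent vectors at `x` to orbits of `𝔾ₐ`-actions on `V`. -/
def IsFlexible {d : ℕ} (V : Set (Fin d → K)) : Prop :=
  ∀ x ∈ V, SmoothAt (vanishingIdeal K V) x →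
    tangentSpaceAt (vanishingIdeal K V) x =
      Submodule.span K {w | ∃ A : Fin d → MvPolynomial (Fin (d + 1)) K,
        IsGaAction V A ∧ w = fun i => eval (Fin.cons (0 : K) x) (pderiv 0 (A i))}

/-- Evaluation of a polynomial multiplication map. -/
noncomputable def mulEval {N : ℕ} (mul : Fin N → MvPolynomial (Fin (N + N)) K) (g h : Fin N → K) :
    Fin N → K :=
  fun i => eval (Fin.append g h) (mul i)

/-- Evaluation of a polynomial action map. -/
noncomputable def actEval {N d : ℕ} (act : Fin d → MvPolynomial (Fin (N + d)) K) (g : Fin N → K)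
    (x : Fin d → K) : Fin d → K :=
  fun i => eval (Fin.append g x) (act i)

/-- `V` is a homogeneous space: there is an (affine) algebraic group, i.e. an affine variety
`G` with polynomial multiplication and inversion, together with a regular (polynomial)
transitive action of `G` on `V`. -/
def IsHomogeneousSpace {d : ℕ} (V : Set (Fin d → K)) : Prop :=
  ∃ (N : ℕ) (G : Set (Fin N → K)) (mul : Fin N → MvPolynomial (Fin (N + N)) K)
    (inv : Fin N → MvPolynomial (Fin N) K) (e : Fin N → K)
    (act : Fin d → MvPolynomial (Fin (N + d)) K),
    IsAffineVariety G ∧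
    e ∈ G ∧
    (∀ g ∈ G, ∀ h ∈ G, mulEval mul g h ∈ G) ∧
    (∀ g ∈ G, (fun i => eval g (inv i)) ∈ G) ∧
    (∀ g ∈ G, ∀ h ∈ G, ∀ l ∈ G,
      mulEval mul (mulEval mul g h) l = mulEval mul g (mulEval mul h l)) ∧
    (∀ g ∈ G, mulEval mul e g = g ∧ mulEval mul g e = g) ∧
    (∀ g ∈ G, mulEval mul g (fun i => eval g (inv i)) = e ∧
      mulEval mul (fun i => eval g (inv i)) g = e) ∧
    (∀ g ∈ G, ∀ x ∈ V, actEval act g x ∈ V) ∧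
    (∀ x ∈ V, actEval act e x = x) ∧
    (∀ g ∈ G, ∀ h ∈ G, ∀ x ∈ V, actEval act (mulEval mul g h) x = actEval act g (actEval act h x)) ∧
    (∀ x ∈ V, ∀ y ∈ V, ∃ g ∈ G, actEval act g x = y)

end ArzhZai

section AuxZZ
open MvPolynomial

lemma poly_split {K : Type} [Field K] [Infinite K] (c : K) (p q : Polynomial K)
    (hq0 : q.coeff 0 = 0)
    (h : ∀ u v : K, u * v = c → p.eval u + q.eval v = 0) : p = 0 ∧ q = 0 := by
  by_cases hc : c = 0
  · subst hc
    have hp : p = 0 := by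
      apply Polynomial.funext; intro u
      have := h u 0 (by ring)
      simpa [← Polynomial.coeff_zero_eq_eval_zero, hq0] using this
    have hq : q = 0 := by
      apply Polynomial.funext; intro v
      have := h 0 v (by ring)
      simpa [hp] using this
    exact ⟨hp, hq⟩
  · set N := q.natDegree + 1 with hN
    set s : Polynomial K :=
      ∑ j ∈ Finset.range N, Polynomial.C (q.coeff (j+1) * c^(j+1)) * Polynomial.X ^ (N - 1 - j) with hs
    set r := p * Polynomial.X ^ N + s with hr
    have hseval : ∀ u : K, u ≠ 0 → s.eval u = u ^ N * q.eval (c * u⁻¹) := by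
      intro u hu
      have hq' : q.eval (c * u⁻¹) = ∑ j ∈ Finset.range N, q.coeff j * (c * u⁻¹) ^ j :=
        Polynomial.eval_eq_sum_range _
      rw [hq', Finset.mul_sum, hs, Polynomial.eval_finset_sum,
        Finset.sum_range_succ, Finset.sum_range_succ'
          (fun j => u ^ N * (q.coeff j * (c * u⁻¹) ^ j)) q.natDegree,
        q.coeff_natDegree_succ_eq_zero, hq0]
      simp only [zero_mul, map_zero, mul_zero, add_zero, zero_mul, Polynomial.eval_mul,
        Polynomial.eval_C, Polynomial.eval_pow, Polynomial.eval_X, Polynomial.eval_zero]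
      apply Finset.sum_congr rfl
      intro j hj
      have hjN : j + 1 ≤ N := by simp at hj; omega
      have hpow : u ^ N = u ^ (N - 1 - j) * u ^ (j + 1) := by
        rw [← pow_add]; congr 1; omega
      rw [hpow, mul_pow]
      field_simp
      rw [one_div, inv_pow, mul_inv_cancel_right₀ (pow_ne_zero _ hu)]
    have hr0 : r = 0 := by
      apply Polynomial.eq_zero_of_infinite_isRoot
      apply Set.Infinite.mono (s := {x : K | x ≠ 0})
      · intro u hu
        have hu' : (u : K) ≠ 0 := hu
        have h1 := h u (c * u⁻¹) (by field_simp)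
        have h2 : q.eval (c * u⁻¹) = - p.eval u := by linear_combination h1
        simp only [Polynomial.IsRoot, Set.mem_setOf_eq, hr, Polynomial.eval_add,
          Polynomial.eval_mul, Polynomial.eval_pow, Polynomial.eval_X, hseval u hu', h2]
        ring
      · have : {x : K | x ≠ 0} = ({0} : Set K)ᶜ := by ext x; simp
        rw [this]
        exact (Set.finite_singleton 0).infinite_compl
    have hscoeff : ∀ m, s.coeff m =
        ∑ j ∈ Finset.range N, if m = N - 1 - j then q.coeff (j+1) * c^(j+1) else 0 := by
      intro m
      rw [hs, Polynomial.finset_sum_coeff]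
      apply Finset.sum_congr rfl
      intro j _
      rw [Polynomial.coeff_C_mul, Polynomial.coeff_X_pow]
      split <;> simp_all
    have hshigh : ∀ m, N ≤ m → s.coeff m = 0 := by
      intro m hm
      rw [hscoeff]
      apply Finset.sum_eq_zero
      intro j hj
      simp only [Finset.mem_range] at hj
      have : m ≠ N - 1 - j := by omega
      exact if_neg this
    have hp : p = 0 := by
      ext i
      have := congrArg (fun t => Polynomial.coeff t (i + N)) hr0
      simp only [hr, Polynomial.coeff_add, Polynomial.coeff_mul_X_pow,
        Polynomial.coeff_zero] at this
      rw [hshigh (i + N) (by omega)] at this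
      simpa using this
    have hs0 : s = 0 := by
      have := hr0
      rw [hr, hp] at this
      simpa using this
    have hq : q = 0 := by
      ext n
      rcases n with _ | k
      · simpa using hq0
      · by_cases hk : k < N
        · have := congrArg (fun t => Polynomial.coeff t (N - 1 - k)) hs0
          simp only [Polynomial.coeff_zero] at this
          rw [hscoeff] at this
          rw [Finset.sum_eq_single k] at this
          · simp only [if_pos rfl] at this
            have hc' : c ^ (k+1) ≠ 0 := pow_ne_zero _ hc
            simpa [hc'] using (mul_eq_zero.mp this).resolve_right hc'
          · intro j hj hjk
            simp only [Finset.mem_range] at hj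
            have : N - 1 - k ≠ N - 1 - j := by omega
            exact if_neg this
          · intro hk'
            simp only [Finset.mem_range] at hk'
            omega
        · apply Polynomial.coeff_eq_zero_of_natDegree_lt
          omega
    exact ⟨hp, hq⟩


lemma nf_exists {K : Type} [Field K] {d : ℕ} (fhat : MvPolynomial (Fin d) K)
    (g : MvPolynomial (Fin (d+2)) K) :
    ∃ (P Q : Polynomial (MvPolynomial (Fin d) K)), Q.coeff 0 = 0 ∧
      g - (Polynomial.eval₂ (rename (Fin.succ ∘ Fin.succ) : MvPolynomial (Fin d) K →ₐ[K] _).toRingHom (X 0) P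
         + Polynomial.eval₂ (rename (Fin.succ ∘ Fin.succ) : MvPolynomial (Fin d) K →ₐ[K] _).toRingHom (X 1) Q)
        ∈ Ideal.span {(X 0 * X 1 - rename (Fin.succ ∘ Fin.succ) fhat : MvPolynomial (Fin (d+2)) K)} := by
  set ρ := (rename (Fin.succ ∘ Fin.succ) : MvPolynomial (Fin d) K →ₐ[K] _).toRingHom with hρ
  set E := (X 0 * X 1 - rename (Fin.succ ∘ Fin.succ) fhat : MvPolynomial (Fin (d+2)) K) with hE
  have hEρ : E = X 0 * X 1 - ρ fhat := rfl
  induction g using MvPolynomial.induction_on with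
  | C a =>
    refine ⟨Polynomial.C (C a), 0, by simp, ?_⟩
    simp [hρ, rename_C]
  | add p q ihp ihq =>
    obtain ⟨P1, Q1, h01, hm1⟩ := ihp
    obtain ⟨P2, Q2, h02, hm2⟩ := ihq
    refine ⟨P1 + P2, Q1 + Q2, by simp [h01, h02], ?_⟩
    have := add_mem hm1 hm2
    convert this using 1
    simp only [Polynomial.eval₂_add]
    ring
  | mul_X p n ih =>
    obtain ⟨P, Q, h0, hm⟩ := ih
    induction n using Fin.cases with
    | zero =>
      refine ⟨P * Polynomial.X + Polynomial.C ((Q.divX * Polynomial.C fhat).coeff 0),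
        Q.divX * Polynomial.C fhat - Polynomial.C ((Q.divX * Polynomial.C fhat).coeff 0),
        by simp, ?_⟩
      have hPsiQ : Polynomial.eval₂ ρ (X 1) Q = X 1 * Polynomial.eval₂ ρ (X 1) Q.divX := by
        conv_lhs => rw [show Q = Polynomial.X * Q.divX by
          conv_lhs => rw [← Q.X_mul_divX_add]
          rw [h0, map_zero, add_zero]]
        rw [Polynomial.eval₂_mul, Polynomial.eval₂_X]
      have key : p * X 0 -
          (Polynomial.eval₂ ρ (X 0) (P * Polynomial.X + Polynomial.C ((Q.divX * Polynomial.C fhat).coeff 0))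
           + Polynomial.eval₂ ρ (X 1) (Q.divX * Polynomial.C fhat - Polynomial.C ((Q.divX * Polynomial.C fhat).coeff 0))) =
          (p - (Polynomial.eval₂ ρ (X 0) P + Polynomial.eval₂ ρ (X 1) Q)) * X 0
          + Polynomial.eval₂ ρ (X 1) Q.divX * E := by
        simp only [Polynomial.eval₂_mul, Polynomial.eval₂_add, Polynomial.eval₂_sub,
          Polynomial.eval₂_X, Polynomial.eval₂_C, hPsiQ, hEρ]
        ring
      rw [key]
      exact add_mem (Ideal.mul_mem_right _ _ hm)
        (Ideal.mul_mem_left _ _ (Ideal.subset_span (Set.mem_singleton _)))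
    | succ n1 =>
      induction n1 using Fin.cases with
      | zero =>
        rw [Fin.succ_zero_eq_one]
        refine ⟨P.divX * Polynomial.C fhat, Q * Polynomial.X + Polynomial.C (P.coeff 0) * Polynomial.X,
          by simp, ?_⟩
        have hPhiP : Polynomial.eval₂ ρ (X 0) P
            = X 0 * Polynomial.eval₂ ρ (X 0) P.divX + ρ (P.coeff 0) := by
          conv_lhs => rw [← P.X_mul_divX_add]
          rw [Polynomial.eval₂_add, Polynomial.eval₂_mul, Polynomial.eval₂_X, Polynomial.eval₂_C]
        have key : p * X 1 -
            (Polynomial.eval₂ ρ (X 0) (P.divX * Polynomial.C fhat)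
             + Polynomial.eval₂ ρ (X 1) (Q * Polynomial.X + Polynomial.C (P.coeff 0) * Polynomial.X)) =
            (p - (Polynomial.eval₂ ρ (X 0) P + Polynomial.eval₂ ρ (X 1) Q)) * X 1
            + Polynomial.eval₂ ρ (X 0) P.divX * E := by
          simp only [Polynomial.eval₂_mul, Polynomial.eval₂_add, Polynomial.eval₂_X,
            Polynomial.eval₂_C, hPhiP, hEρ]
          ring
        rw [key]
        exact add_mem (Ideal.mul_mem_right _ _ hm)
          (Ideal.mul_mem_left _ _ (Ideal.subset_span (Set.mem_singleton _)))
      | succ i =>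
        refine ⟨P * Polynomial.C (X i), Q * Polynomial.C (X i), by simp [h0], ?_⟩
        have hXi : (X i.succ.succ : MvPolynomial (Fin (d+2)) K) = ρ (X i) := by
          simp [hρ, rename_X]
        have key : p * X i.succ.succ -
            (Polynomial.eval₂ ρ (X 0) (P * Polynomial.C (X i))
             + Polynomial.eval₂ ρ (X 1) (Q * Polynomial.C (X i))) =
            (p - (Polynomial.eval₂ ρ (X 0) P + Polynomial.eval₂ ρ (X 1) Q)) * ρ (X i) := by
          simp only [Polynomial.eval₂_mul, Polynomial.eval₂_C, hXi]
          ring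
        rw [key]
        exact Ideal.mul_mem_right _ _ hm

end AuxZZ

namespace ArzhZai

/-- Lemma `susp_ideal_lem`: if `I(Y) = (f_1, …, f_m)` and `f̂` is any
polynomial restricting to the function `f` on `Y`, then the vanishing ideal of the
suspension `Susp(Y, f) ⊆ 𝔸^{d+2}` is `(uv - f̂, f_1, …, f_m)`. -/
theorem vanishingIdeal_susp
    {K : Type} [Field K] [IsAlgClosed K] [CharZero K] {d m : ℕ}
    (Y : Set (Fin d → K)) (fs : Fin m → MvPolynomial (Fin d) K)
    (f fhat : MvPolynomial (Fin d) K)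
    (hY : IsAffineVariety Y)
    (hgen : vanishingIdeal K Y = Ideal.span (Set.range fs))
    (hf : NonconstOn Y f)
    (hlift : ∀ y ∈ Y, eval y fhat = eval y f) :
    vanishingIdeal K (Susp Y f) =
      Ideal.span
        ({MvPolynomial.X 0 * MvPolynomial.X 1 -
            rename (Fin.succ ∘ Fin.succ) fhat} ∪
          Set.range fun i => rename (Fin.succ ∘ Fin.succ) (fs i) :
          Set (MvPolynomial (Fin (d + 2)) K)) := by
  haveI : Infinite K := inferInstance
  classical
  set σ : Fin d → Fin (d + 2) := Fin.succ ∘ Fin.succ with hσ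
  set E : MvPolynomial (Fin (d + 2)) K := X 0 * X 1 - rename σ fhat with hE
  have hEvan : ∀ x ∈ Susp Y f, eval x E = 0 := by
    rintro x ⟨hxY, hx01⟩
    simp only [hE, map_sub, map_mul, eval_X, eval_rename]
    rw [show x ∘ σ = (fun i => x i.succ.succ) from rfl, hlift _ hxY, hx01, sub_self]
  apply le_antisymm
  · intro g hg
    obtain ⟨P, Q, h0, hm⟩ := nf_exists fhat g
    have hcoeff : ∀ y ∈ Y, (∀ k, eval y (P.coeff k) = 0) ∧ (∀ k, eval y (Q.coeff k) = 0) := by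
      intro y hy
      obtain ⟨t, ht⟩ := Ideal.mem_span_singleton'.mp hm
      have main : ∀ u v : K, u * v = eval y f →
          (P.map (eval y : MvPolynomial (Fin d) K →+* K)).eval u
            + (Q.map (eval y : MvPolynomial (Fin d) K →+* K)).eval v = 0 := by
        intro u v huv
        set x : Fin (d + 2) → K := Fin.cons u (Fin.cons v y) with hx
        have hxtail : (fun i => x i.succ.succ) = y := by
          funext i; simp [hx, Fin.cons_succ]
        have hxS : x ∈ Susp Y f := by
          refine ⟨?_, ?_⟩
          · rw [hxtail]; exact hy
          · have h1 : x 0 = u := by simp [hx]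
            have h2 : x 1 = v := by
              rw [hx, show (1 : Fin (d + 2)) = (0 : Fin (d + 1)).succ from rfl,
                Fin.cons_succ, Fin.cons_zero]
            rw [h1, h2, hxtail, huv]
        have hgx : eval x g = 0 := mem_vanishingIdeal_iff.mp hg x hxS
        have hEx : eval x E = 0 := hEvan x hxS
        have hcompeval : (eval x).comp
            ((rename (Fin.succ ∘ Fin.succ) : MvPolynomial (Fin d) K →ₐ[K] _).toRingHom)
            = (eval y : MvPolynomial (Fin d) K →+* K) := by
          refine RingHom.ext fun r => ?_
          show eval x (rename (Fin.succ ∘ Fin.succ) r) = eval y r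
          rw [eval_rename, show x ∘ (Fin.succ ∘ Fin.succ) = y from by
            funext i; exact congrFun hxtail i]
        have hΦ : eval x (Polynomial.eval₂
            (rename (Fin.succ ∘ Fin.succ) : MvPolynomial (Fin d) K →ₐ[K] _).toRingHom (X 0) P)
            = (P.map (eval y : MvPolynomial (Fin d) K →+* K)).eval u := by
          rw [Polynomial.hom_eval₂, hcompeval, Polynomial.eval_map, eval_X]
          rw [show x 0 = u from by simp [hx]]
        have hΨ : eval x (Polynomial.eval₂
            (rename (Fin.succ ∘ Fin.succ) : MvPolynomial (Fin d) K →ₐ[K] _).toRingHom (X 1) Q)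
            = (Q.map (eval y : MvPolynomial (Fin d) K →+* K)).eval v := by
          rw [Polynomial.hom_eval₂, hcompeval, Polynomial.eval_map, eval_X]
          rw [show x 1 = v from by
            rw [hx, show (1 : Fin (d + 2)) = (0 : Fin (d + 1)).succ from rfl,
              Fin.cons_succ, Fin.cons_zero]]
        have hev := congrArg (eval x) ht
        rw [map_mul, hEx, mul_zero, map_sub, hgx, map_add, hΦ, hΨ] at hev
        linear_combination hev
      have hsplit := poly_split (eval y f) (P.map (eval y : MvPolynomial (Fin d) K →+* K))
        (Q.map (eval y : MvPolynomial (Fin d) K →+* K))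
        (by rw [Polynomial.coeff_map, h0, map_zero]) main
      constructor <;> intro k
      · have := congrArg (fun r => Polynomial.coeff r k) hsplit.1
        simpa [Polynomial.coeff_map] using this
      · have := congrArg (fun r => Polynomial.coeff r k) hsplit.2
        simpa [Polynomial.coeff_map] using this
    have hrenmem : ∀ r ∈ vanishingIdeal K Y,
        (rename σ r : MvPolynomial (Fin (d + 2)) K)
          ∈ Ideal.span ({E} ∪ Set.range fun i => rename σ (fs i)) := by
      intro r hr
      rw [hgen] at hr
      have h1 := Ideal.mem_map_of_mem
        (rename σ : MvPolynomial (Fin d) K →ₐ[K] _).toRingHom hr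
      rw [Ideal.map_span] at h1
      refine Ideal.span_mono ?_ h1
      rintro _ ⟨_, ⟨i, rfl⟩, rfl⟩
      exact Or.inr ⟨i, rfl⟩
    have hPmem : ∀ k, P.coeff k ∈ vanishingIdeal K Y :=
      fun k => mem_vanishingIdeal_iff.mpr fun y hy => (hcoeff y hy).1 k
    have hQmem : ∀ k, Q.coeff k ∈ vanishingIdeal K Y :=
      fun k => mem_vanishingIdeal_iff.mpr fun y hy => (hcoeff y hy).2 k
    have hΦmem : Polynomial.eval₂
        (rename (Fin.succ ∘ Fin.succ) : MvPolynomial (Fin d) K →ₐ[K] _).toRingHom (X 0) P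
        ∈ Ideal.span ({E} ∪ Set.range fun i => rename σ (fs i)) := by
      rw [Polynomial.eval₂_eq_sum, Polynomial.sum_def]
      exact Submodule.sum_mem _ fun k _ => Ideal.mul_mem_right _ _ (hrenmem _ (hPmem k))
    have hΨmem : Polynomial.eval₂
        (rename (Fin.succ ∘ Fin.succ) : MvPolynomial (Fin d) K →ₐ[K] _).toRingHom (X 1) Q
        ∈ Ideal.span ({E} ∪ Set.range fun i => rename σ (fs i)) := by
      rw [Polynomial.eval₂_eq_sum, Polynomial.sum_def]
      exact Submodule.sum_mem _ fun k _ => Ideal.mul_mem_right _ _ (hrenmem _ (hQmem k))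
    have hdecomp : g = (g - (Polynomial.eval₂
        (rename (Fin.succ ∘ Fin.succ) : MvPolynomial (Fin d) K →ₐ[K] _).toRingHom (X 0) P
        + Polynomial.eval₂
        (rename (Fin.succ ∘ Fin.succ) : MvPolynomial (Fin d) K →ₐ[K] _).toRingHom (X 1) Q))
        + (Polynomial.eval₂
        (rename (Fin.succ ∘ Fin.succ) : MvPolynomial (Fin d) K →ₐ[K] _).toRingHom (X 0) P
        + Polynomial.eval₂
        (rename (Fin.succ ∘ Fin.succ) : MvPolynomial (Fin d) K →ₐ[K] _).toRingHom (X 1) Q) := by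
      ring
    rw [hdecomp]
    exact add_mem (Ideal.span_mono Set.subset_union_left hm) (add_mem hΦmem hΨmem)
  · rw [Ideal.span_le]
    rintro g hg
    rw [SetLike.mem_coe, mem_vanishingIdeal_iff]
    intro x hx
    rcases hg with hgE | ⟨i, rfl⟩
    · rw [Set.mem_singleton_iff] at hgE
      rw [hgE]
      exact hEvan x hx
    · simp only [aeval_rename]
      have hmem : fs i ∈ vanishingIdeal K Y := hgen ▸ Ideal.subset_span ⟨i, rfl⟩
      exact mem_vanishingIdeal_iff.mp hmem (x ∘ (Fin.succ ∘ Fin.succ)) hx.1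


end ArzhZai
end

section
/- Let K be an algebraically closed field of characteristic zero, let f(y) = α(y − y_0)(y − y_1)⋯(y − y_d) ∈ K[y] with α ∈ K^× and pairwise distinct roots y_0, …, y_d ∈ K, and let X = {xz = f(y)} ⊆ A^3. Set D = {z = 0, y = y_1} ∪ … ∪ {z = 0, y = y_d} ⊆ X and U = X ∖ D. Then U is an affine variety, the rational function h = x/(α(y−y_1)⋯(y−y_d)) = (y − y_0)/z is regular on U, the algebra K[U] is generated by h and z, and U is isomorphic to the affine plane A^2. -/
open MvPolynomial

namespace ArzhZai

/-- A `K`-valued function `φ` is regular on a subset `V ⊆ 𝔸^d` if at every point of `V` it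
can be written as a ratio of polynomials whose denominator does not vanish there. -/
def IsRegularOn {K : Type} [Field K] {d : ℕ} (V : Set (Fin d → K))
    (φ : (Fin d → K) → K) : Prop :=
  ∀ q ∈ V, ∃ a b : MvPolynomial (Fin d) K, eval q b ≠ 0 ∧
    ∀ q' ∈ V, eval q' b ≠ 0 → φ q' * eval q' b = eval q' a

/-- `eval` commutes with `bind₁`. -/
lemma eval_bind₁' {K : Type} [CommSemiring K] {n m : ℕ}
    (x : Fin m → K) (g : Fin n → MvPolynomial (Fin m) K) (p : MvPolynomial (Fin n) K) :
    eval x (bind₁ g p) = eval (fun i => eval x (g i)) p := by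
  simpa using eval₂Hom_bind₁ (RingHom.id K) x g p

/-- A function on affine space over an algebraically closed field which is everywhere
locally a ratio of polynomials is a polynomial. -/
lemma poly_of_locally_fraction {K : Type} [Field K] [IsAlgClosed K] [Infinite K] {n : ℕ}
    (ψ : (Fin n → K) → K)
    (H : ∀ w, ∃ a b : MvPolynomial (Fin n) K, eval w b ≠ 0 ∧
      ∀ w', eval w' b ≠ 0 → ψ w' * eval w' b = eval w' a) :
    ∃ P : MvPolynomial (Fin n) K, ∀ w, ψ w = eval w P := by
  classical
  choose A B hB hAB using H
  have key : ∀ w w', ψ w' * eval w' (B w) = eval w' (A w) := by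
    intro w w'
    have hBw : (B w) ≠ 0 := fun h => hB w (by simp [h])
    have hBw' : (B w') ≠ 0 := fun h => hB w' (by simp [h])
    have hcross : A w * B w' = A w' * B w := by
      have h0 : (A w * B w' - A w' * B w) * (B w * B w') = 0 := by
        apply MvPolynomial.funext
        intro x
        simp only [map_mul, map_sub, map_zero]
        by_cases h1 : eval x (B w) = 0
        · rw [h1]; ring
        by_cases h2 : eval x (B w') = 0
        · rw [h2]; ring
        · rw [← hAB w x h1, ← hAB w' x h2]; ring
      rcases mul_eq_zero.mp h0 with h | h
      · exact sub_eq_zero.mp h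
      · exact absurd h (mul_ne_zero hBw hBw')
    have hev := congrArg (eval w') hcross
    simp only [map_mul] at hev
    rw [← hAB w' w' (hB w')] at hev
    have hev' : eval w' (A w) * eval w' (B w') = (ψ w' * eval w' (B w)) * eval w' (B w') := by
      linear_combination hev
    exact (mul_right_cancel₀ (hB w') hev').symm
  -- the denominators generate the unit ideal (Nullstellensatz)
  have hzl : MvPolynomial.zeroLocus K (Ideal.span (Set.range B)) = ∅ := by
    ext x
    simp only [MvPolynomial.mem_zeroLocus_iff, Set.mem_empty_iff_false, iff_false, not_forall]
    exact ⟨B x, Ideal.subset_span (Set.mem_range_self x), hB x⟩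
  have htop : Ideal.span (Set.range B) = ⊤ := by
    have h := MvPolynomial.vanishingIdeal_zeroLocus_eq_radical (K := K) (Ideal.span (Set.range B))
    rw [hzl, MvPolynomial.vanishingIdeal_empty] at h
    exact Ideal.radical_eq_top.mp h.symm
  have h1 : (1 : MvPolynomial (Fin n) K) ∈ Ideal.span (Set.range B) := by
    rw [htop]; trivial
  obtain ⟨c, hsupp, hsum⟩ := Submodule.mem_span_set.mp h1
  have hsel : ∀ p ∈ c.support, ∃ w, B w = p := fun p hp => hsupp hp
  choose g hg using hsel
  refine ⟨∑ p ∈ c.support.attach, c p.1 * A (g p.1 p.2), ?_⟩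
  intro w'
  have h1' : (1 : K) = ∑ p ∈ c.support, eval w' (c p) * eval w' p := by
    have := congrArg (eval w') hsum
    rw [Finsupp.sum, map_sum] at this
    simp only [smul_eq_mul, map_mul, map_one] at this
    exact this.symm
  calc ψ w' = ψ w' * 1 := (mul_one _).symm
    _ = ∑ p ∈ c.support, eval w' (c p) * (ψ w' * eval w' p) := by
        rw [h1', Finset.mul_sum]; apply Finset.sum_congr rfl; intros; ring
    _ = ∑ p ∈ c.support.attach, eval w' (c p.1) * (ψ w' * eval w' p.1) :=
        (Finset.sum_attach _ fun p => eval w' (c p) * (ψ w' * eval w' p)).symm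
    _ = ∑ p ∈ c.support.attach, eval w' (c p.1) * eval w' (A (g p.1 p.2)) := by
        apply Finset.sum_congr rfl
        intro p _
        rw [← key (g p.1 p.2) w', hg p.1 p.2]
    _ = eval w' (∑ p ∈ c.support.attach, c p.1 * A (g p.1 p.2)) := by
        rw [map_sum]
        simp only [map_mul]

/-- for the Danielewski surface `X = {xz = α(y-y₀)⋯(y-y_d)}` with
pairwise distinct roots, `D = ⋃_{i=1}^{d} {z = 0, y = y_i}` and `U = X ∖ D`, the function
`h = x/(α(y-y₁)⋯(y-y_d)) = (y-y₀)/z` is regular on `U`, the algebra `K[U]` of regular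
functions on `U` is generated by `h` and `z`, and `(h, z)` defines an isomorphism of `U`
onto the affine plane `𝔸²` (whose polynomial inverse is `G`); in particular `U` is an
affine variety. Coordinates on `𝔸³` are `(x, y, z) = (q 0, q 1, q 2)`. -/
theorem danielewski_complement_affine_plane
    {K : Type} [Field K] [IsAlgClosed K] [CharZero K] (d : ℕ)
    (α : K) (hα : α ≠ 0) (r : Fin (d + 1) → K) (hr : Function.Injective r)
    (X : Set (Fin 3 → K)) (hX : X = {q | q 0 * q 2 = α * ∏ i, (q 1 - r i)})
    (D : Set (Fin 3 → K)) (hD : D = {q ∈ X | q 2 = 0 ∧ ∃ i : Fin d, q 1 = r i.succ})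
    (U : Set (Fin 3 → K)) (hU : U = X \ D) :
    ∃ h : (Fin 3 → K) → K,
      IsRegularOn U h ∧
      (∀ q ∈ U, h q * q 2 = q 1 - r 0) ∧
      (∀ q ∈ U, h q * (α * ∏ i : Fin d, (q 1 - r i.succ)) = q 0) ∧
      (∀ φ : (Fin 3 → K) → K, IsRegularOn U φ →
        ∃ P : MvPolynomial (Fin 2) K, ∀ q ∈ U, φ q = eval ![h q, q 2] P) ∧
      (∃ G : Fin 3 → MvPolynomial (Fin 2) K,
        (∀ w : Fin 2 → K, (fun i => eval w (G i)) ∈ U) ∧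
        (∀ q ∈ U, (fun i => eval ![h q, q 2] (G i)) = q) ∧
        (∀ w : Fin 2 → K, ![h fun i => eval w (G i), (fun i => eval w (G i)) 2] = w)) := by
  classical
  subst hX hD hU
  -- membership in U, unfolded
  have hUmem : ∀ q : Fin 3 → K,
      q ∈ ({q | q 0 * q 2 = α * ∏ i, (q 1 - r i)} \
        {q ∈ {q : Fin 3 → K | q 0 * q 2 = α * ∏ i, (q 1 - r i)} |
          q 2 = 0 ∧ ∃ i : Fin d, q 1 = r i.succ}) ↔
      (q 0 * q 2 = α * ∏ i, (q 1 - r i)) ∧ ¬(q 2 = 0 ∧ ∃ i : Fin d, q 1 = r i.succ) := by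
    intro q
    constructor
    · rintro ⟨hx, hd⟩
      exact ⟨hx, fun hcon => hd ⟨hx, hcon⟩⟩
    · rintro ⟨hx, hd⟩
      exact ⟨hx, fun hcon => hd hcon.2⟩
  set U : Set (Fin 3 → K) :=
    ({q | q 0 * q 2 = α * ∏ i, (q 1 - r i)} \
      {q ∈ {q : Fin 3 → K | q 0 * q 2 = α * ∏ i, (q 1 - r i)} |
        q 2 = 0 ∧ ∃ i : Fin d, q 1 = r i.succ}) with hUdef
  -- if z = 0 on U then y = r 0
  have hz0 : ∀ q ∈ U, q 2 = 0 → q 1 = r 0 := by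
    intro q hq hz
    obtain ⟨hx, hd⟩ := (hUmem q).mp hq
    rw [hz, mul_zero] at hx
    have hprod : ∏ i, (q 1 - r i) = 0 := by
      rcases mul_eq_zero.mp hx.symm with h | h
      · exact absurd h hα
      · exact h
    obtain ⟨i, -, hi⟩ := Finset.prod_eq_zero_iff.mp hprod
    have hi' : q 1 = r i := sub_eq_zero.mp hi
    by_cases h0 : i = 0
    · rw [hi', h0]
    · obtain ⟨j, rfl⟩ := Fin.exists_succ_eq_of_ne_zero h0
      exact absurd ⟨hz, j, hi'⟩ hd
  -- the denominator is nonzero when y = r 0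
  have hden0 : ∀ q : Fin 3 → K, q 1 = r 0 →
      α * ∏ i : Fin d, (q 1 - r i.succ) ≠ 0 := by
    intro q hy
    refine mul_ne_zero hα (Finset.prod_ne_zero_iff.mpr fun i _ => ?_)
    rw [hy]
    exact sub_ne_zero.mpr fun h => Fin.succ_ne_zero i (hr h).symm
  -- the function h
  set h : (Fin 3 → K) → K := fun q =>
    if q 2 = 0 then q 0 / (α * ∏ i : Fin d, (q 1 - r i.succ)) else (q 1 - r 0) / q 2
    with hh
  -- h * z = y - r 0 on U
  have hhz : ∀ q ∈ U, h q * q 2 = q 1 - r 0 := by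
    intro q hq
    by_cases hz : q 2 = 0
    · rw [hh]
      simp only [hz, if_pos rfl, mul_zero]
      rw [hz0 q hq hz, sub_self]
    · rw [hh]
      simp only [if_neg hz]
      exact div_mul_cancel₀ _ hz
  -- h * (α ∏ (y - r i.succ)) = x on U
  have hhden : ∀ q ∈ U, h q * (α * ∏ i : Fin d, (q 1 - r i.succ)) = q 0 := by
    intro q hq
    by_cases hz : q 2 = 0
    · rw [hh]
      simp only [hz, if_pos rfl]
      exact div_mul_cancel₀ _ (hden0 q (hz0 q hq hz))
    · rw [hh]
      simp only [if_neg hz]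
      have hx := ((hUmem q).mp hq).1
      rw [Fin.prod_univ_succ] at hx
      rw [div_mul_eq_mul_div, div_eq_iff hz]
      linear_combination -hx
  -- regularity of h
  have hreg : IsRegularOn U h := by
    intro q hq
    by_cases hz : q 2 = 0
    · refine ⟨MvPolynomial.X 0,
        C α * ∏ i : Fin d, (MvPolynomial.X 1 - C (r i.succ)), ?_, ?_⟩
      · simp only [map_mul, eval_C, map_prod, map_sub, eval_X]
        exact hden0 q (hz0 q hq hz)
      · intro q' hq' _
        have := hhden q' hq'
        simp only [map_mul, eval_C, map_prod, map_sub, eval_X]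
        rw [this]
    · refine ⟨MvPolynomial.X 1 - C (r 0), MvPolynomial.X 2, ?_, ?_⟩
      · simpa using hz
      · intro q' hq' _
        simpa using hhz q' hq'
  -- the inverse map G
  set G : Fin 3 → MvPolynomial (Fin 2) K :=
    ![C α * MvPolynomial.X 0 *
        ∏ i : Fin d, (C (r 0) + MvPolynomial.X 0 * MvPolynomial.X 1 - C (r i.succ)),
      C (r 0) + MvPolynomial.X 0 * MvPolynomial.X 1,
      MvPolynomial.X 1] with hG
  have hG0 : ∀ w : Fin 2 → K,
      eval w (G 0) = α * w 0 * ∏ i : Fin d, (r 0 + w 0 * w 1 - r i.succ) := by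
    intro w
    rw [hG]
    simp
  have hG1 : ∀ w : Fin 2 → K, eval w (G 1) = r 0 + w 0 * w 1 := by
    intro w; rw [hG]; simp
  have hG2 : ∀ w : Fin 2 → K, eval w (G 2) = w 1 := by
    intro w; rw [hG]; simp
  -- the image of G lies in U
  have hGmem : ∀ w : Fin 2 → K, (fun i => eval w (G i)) ∈ U := by
    intro w
    apply (hUmem _).mpr
    constructor
    · show eval w (G 0) * eval w (G 2) = α * ∏ i, (eval w (G 1) - r i)
      rw [hG0, hG1, hG2, Fin.prod_univ_succ, add_sub_cancel_left]
      ring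
    · rintro ⟨hz, i, hy⟩
      simp only [hG2] at hz
      simp only [hG1, hz, mul_zero, add_zero] at hy
      exact Fin.succ_ne_zero i (hr hy.symm)
  -- G is a left inverse of (h, z) on U
  have hGinv1 : ∀ q ∈ U, (fun i => eval ![h q, q 2] (G i)) = q := by
    intro q hq
    have hy : r 0 + h q * q 2 = q 1 := by
      have := hhz q hq; linear_combination this
    funext i
    fin_cases i
    · show eval ![h q, q 2] (G 0) = q 0
      rw [hG0]
      simp only [Matrix.cons_val_zero, Matrix.cons_val_one, Matrix.head_cons]
      rw [hy]
      linear_combination hhden q hq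
    · show eval ![h q, q 2] (G 1) = q 1
      rw [hG1]
      simpa using hy
    · show eval ![h q, q 2] (G 2) = q 2
      rw [hG2]
      simp
  -- (h, z) is a left inverse of G
  have hGinv2 : ∀ w : Fin 2 → K,
      ![h fun i => eval w (G i), (fun i => eval w (G i)) 2] = w := by
    intro w
    have hq2 : (fun i => eval w (G i)) 2 = w 1 := hG2 w
    have hhw : h (fun i => eval w (G i)) = w 0 := by
      by_cases hv : w 1 = 0
      · have e2 : eval w (G 2) = 0 := by rw [hG2]; exact hv
        simp only [hh]
        rw [if_pos e2, hG0, hG1, hv]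
        simp only [mul_zero, add_zero]
        have hne : α * ∏ i : Fin d, (r 0 - r i.succ) ≠ 0 := by
          have := hden0 (fun _ => r 0) rfl
          simpa using this
        rw [div_eq_iff hne]
        ring
      · have e2 : eval w (G 2) ≠ 0 := by rw [hG2]; exact hv
        simp only [hh]
        rw [if_neg e2, hG1, hG2, add_sub_cancel_left]
        exact mul_div_cancel_right₀ _ hv
    funext j
    fin_cases j
    · simpa using hhw
    · simpa using hq2
  -- generation of K[U] by h and z
  have hgen : ∀ φ : (Fin 3 → K) → K, IsRegularOn U φ →
      ∃ P : MvPolynomial (Fin 2) K, ∀ q ∈ U, φ q = eval ![h q, q 2] P := by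
    intro φ hφ
    set ψ : (Fin 2 → K) → K := fun w => φ fun i => eval w (G i) with hψ
    have Hψ : ∀ w, ∃ a b : MvPolynomial (Fin 2) K, eval w b ≠ 0 ∧
        ∀ w', eval w' b ≠ 0 → ψ w' * eval w' b = eval w' a := by
      intro w
      obtain ⟨a, b, hb, hab⟩ := hφ _ (hGmem w)
      refine ⟨bind₁ G a, bind₁ G b, ?_, ?_⟩
      · rw [eval_bind₁']
        exact hb
      · intro w' hw'
        rw [eval_bind₁'] at hw' ⊢
        rw [eval_bind₁']
        exact hab _ (hGmem w') hw'
    obtain ⟨P, hP⟩ := poly_of_locally_fraction ψ Hψ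
    refine ⟨P, fun q hq => ?_⟩
    have := hP ![h q, q 2]
    rw [hψ] at this
    simp only at this
    rw [← this, hGinv1 q hq]
  exact ⟨h, hreg, hhz, hhden, hgen, G, hGmem, hGinv1, hGinv2⟩

end ArzhZai
end

section
/- Let K be an algebraically closed field of characteristic zero and let X ⊆ A^{n+1} be the smooth hypersurface uv = y_1 · p_1(y) ⋯ p_d(y), where y = (y_1, …, y_{n−1}) and p_1, …, p_d ∈ K[y] are irreducible. Set D = {v = 0, p_1 = 0} ∪ … ∪ {v = 0, p_d = 0} ⊆ X and U = X ∖ D. Then U is an affine variety, the rational function h = u/(p_1(y)⋯p_d(y)) = y_1/v is regular on U, the algebra K[U] is generated by the n functions h, v, y_2, …, y_{n−1}, and U is isomorphic to the affine space A^n. -/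
open MvPolynomial

namespace ArzhZai

/-- The map `q ↦ (h(q), v, y₂, …, y_{n-1})` on `X ⊆ 𝔸^{n+1}`, where the ambient coordinates
are `(u, v, y₁, …, y_{n-1}) = (q 0, q 1, q 2, …)` (with `n - 1 = m + 1` variables `y`). -/
def coordMap {K : Type} [Field K] {m : ℕ} (h : (Fin (m + 3) → K) → K)
    (q : Fin (m + 3) → K) : Fin (m + 2) → K :=
  Fin.cons (h q) (Fin.cons (q 1) (fun j : Fin m => q j.succ.succ.succ))

lemma eval_aeval_poly {K : Type} [Field K] {N : ℕ} (γ : Fin N → Polynomial K)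
    (q : MvPolynomial (Fin N) K) (t : K) :
    Polynomial.eval t (MvPolynomial.aeval γ q) = eval (fun i => Polynomial.eval t (γ i)) q := by
  induction q using MvPolynomial.induction_on with
  | C a => simp
  | add p q hp hq => simp only [map_add, Polynomial.eval_add, eval_add, hp, hq]
  | mul_X p i hp => simp only [map_mul, aeval_X, eval_mul, eval_X, hp, Polynomial.eval_mul]

lemma eval_aeval_mv {K : Type} [Field K] {N M : ℕ} (G : Fin N → MvPolynomial (Fin M) K)
    (q : MvPolynomial (Fin N) K) (w : Fin M → K) :
    eval w (MvPolynomial.aeval G q) = eval (fun i => eval w (G i)) q := by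
  induction q using MvPolynomial.induction_on with
  | C a => simp
  | add p q hp hq => simp only [map_add, eval_add, hp, hq]
  | mul_X p i hp => simp only [map_mul, aeval_X, eval_mul, eval_X, hp]

lemma diffAt_apply {K : Type} [Field K] {d : ℕ} (x : Fin d → K) (p : MvPolynomial (Fin d) K)
    (v : Fin d → K) :
    diffAt x p v = ∑ i, v i * eval x (pderiv i p) := rfl

lemma mem_X_iff {K : Type} [Field K] {m d : ℕ} (p : Fin d → MvPolynomial (Fin (m+1)) K)
    (X : Set (Fin (m+3) → K))
    (hX : X = Susp (Set.univ : Set (Fin (m+1) → K)) (MvPolynomial.X 0 * ∏ i, p i))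
    (q : Fin (m+3) → K) :
    q ∈ X ↔ q 0 * q 1 = q 2 * eval (fun j : Fin (m+1) => q j.succ.succ) (∏ i, p i) := by
  have h2 : ((0 : Fin (m+1)).succ.succ : Fin (m+3)) = 2 := by ext; simp [Fin.val_succ]
  subst hX
  simp [Susp, h2]

lemma curve_diff_zero {K : Type} [Field K] {N : ℕ} [CharZero K] (V : Set (Fin N → K)) (q : MvPolynomial (Fin N) K)
    (hq : q ∈ vanishingIdeal K V) (γ : Fin N → Polynomial K)
    (hγ : ∀ t : K, (fun i => Polynomial.eval t (γ i)) ∈ V) :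
    ∑ i, Polynomial.eval 0 (Polynomial.derivative (γ i)) *
      eval (fun i => Polynomial.eval 0 (γ i)) (pderiv i q) = 0 := by
  haveI : Infinite K := Infinite.of_injective (Nat.cast : ℕ → K) Nat.cast_injective
  have chain_rule : ∀ r : MvPolynomial (Fin N) K,
      Polynomial.eval 0 (Polynomial.derivative (MvPolynomial.aeval γ r)) =
      ∑ i, Polynomial.eval 0 (Polynomial.derivative (γ i)) *
        eval (fun i => Polynomial.eval 0 (γ i)) (pderiv i r) := by
    intro r
    induction r using MvPolynomial.induction_on with
    | C a => simp
    | add p q hp hq =>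
        simp only [map_add, Polynomial.derivative_add, Polynomial.eval_add, hp, hq,
          mul_add, Finset.sum_add_distrib]
    | mul_X p i hp =>
        simp only [map_mul, aeval_X, Polynomial.derivative_mul, Polynomial.eval_add,
          Polynomial.eval_mul, hp, pderiv_mul, map_add, mul_add, Finset.sum_add_distrib,
          eval_aeval_poly]
        congr 1
        · rw [Finset.sum_mul]
          refine Finset.sum_congr rfl fun j _ => ?_
          simp [eval_mul, mul_assoc]
        · classical
          rw [Finset.sum_eq_single i]
          · simp [mul_comm]
          · intro j _ hj; simp [pderiv_X_of_ne (Ne.symm hj)]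
          · simp
  have h0 : MvPolynomial.aeval γ q = 0 := by
    apply Polynomial.funext
    intro t
    rw [eval_aeval_poly, Polynomial.eval_zero]
    exact mem_vanishingIdeal_iff.mp hq _ (hγ t)
  rw [← chain_rule, h0]
  simp

lemma line_diff_zero {K : Type} [Field K] {N : ℕ} [CharZero K] (V : Set (Fin N → K)) (q : MvPolynomial (Fin N) K)
    (hq : q ∈ vanishingIdeal K V) (x : Fin N → K) (k : Fin N)
    (hline : ∀ t : K, Function.update x k t ∈ V) :
    eval x (pderiv k q) = 0 := by
  classical
  set γ : Fin N → Polynomial K :=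
    fun i => if i = k then Polynomial.C (x k) + Polynomial.X else Polynomial.C (x i) with hγ
  have hmem : ∀ t : K, (fun i => Polynomial.eval t (γ i)) ∈ V := by
    intro t
    have h : (fun i => Polynomial.eval t (γ i)) = Function.update x k (x k + t) := by
      funext i
      rcases eq_or_ne i k with h | h <;> simp [hγ, h, Function.update_apply]
    rw [h]; exact hline _
  have hc := curve_diff_zero V q hq γ hmem
  have e0 : (fun i => Polynomial.eval 0 (γ i)) = x := by
    funext i; rcases eq_or_ne i k with h | h <;> simp [hγ, h]
  have e1 : ∀ i, Polynomial.eval 0 (Polynomial.derivative (γ i)) = if i = k then 1 else 0 := by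
    intro i; rcases eq_or_ne i k with h | h <;> simp [hγ, h]
  rw [e0] at hc
  simp only [e1, ite_mul, one_mul, zero_mul, Finset.sum_ite_eq', Finset.mem_univ,
    if_true] at hc
  exact hc

lemma star_lemma {K : Type} [Field K] {m d : ℕ} [IsAlgClosed K] [CharZero K]
    (p : Fin d → MvPolynomial (Fin (m+1)) K)
    (X : Set (Fin (m+3) → K))
    (hX : X = Susp (Set.univ : Set (Fin (m+1) → K)) (MvPolynomial.X 0 * ∏ i, p i))
    (hsm : ∀ x ∈ X, SmoothAt (vanishingIdeal K X) x) :
    ∀ y : Fin (m+1) → K, y 0 = 0 → eval y (∏ i, p i) ≠ 0 := by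
  intro y hy0 hyP
  classical
  have hmem := mem_X_iff p X hX
  set P : MvPolynomial (Fin (m+1)) K := ∏ i, p i with hP
  -- index facts
  have e1 : ((0 : Fin (m+2)).succ : Fin (m+3)) = 1 := by ext; simp [Fin.val_succ]
  have e2 : ((0 : Fin (m+1)).succ.succ : Fin (m+3)) = 2 := by ext; simp [Fin.val_succ]
  have n10 : (1 : Fin (m+3)) ≠ 0 := by simp [Fin.ext_iff]
  have n20 : (2 : Fin (m+3)) ≠ 0 := by simp [Fin.ext_iff, Nat.mod_eq_of_lt (show 2 < m+3 by omega)]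
  have n21 : (2 : Fin (m+3)) ≠ 1 := by simp [Fin.ext_iff, Nat.mod_eq_of_lt (show 2 < m+3 by omega)]
  have n01 : (0 : Fin (m+3)) ≠ 1 := Ne.symm n10
  have n02 : (0 : Fin (m+3)) ≠ 2 := Ne.symm n20
  have n12 : (1 : Fin (m+3)) ≠ 2 := Ne.symm n21
  have n0s : ∀ j : Fin m, ((0 : Fin (m+3))) ≠ (j.succ.succ.succ : Fin (m+3)) := by
    intro j; simp [Fin.ext_iff, Fin.val_succ]
  have n1s : ∀ j : Fin m, ((1 : Fin (m+3))) ≠ (j.succ.succ.succ : Fin (m+3)) := by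
    intro j; simp [Fin.ext_iff, Fin.val_succ]
  have n2s : ∀ j : Fin m, ((2 : Fin (m+3))) ≠ (j.succ.succ.succ : Fin (m+3)) := by
    intro j; simp [Fin.ext_iff, Fin.val_succ, Nat.mod_eq_of_lt (show 2 < m+3 by omega)]
  -- the bad (singular) point
  set xb : Fin (m+3) → K := Fin.cons 0 (Fin.cons 0 y) with hxb
  have vs : ∀ j : Fin (m+1), xb j.succ.succ = y j := by
    intro j; simp [hxb]
  have v0 : xb 0 = 0 := by simp [hxb]
  have v1 : xb 1 = 0 := by rw [hxb, ← e1, Fin.cons_succ, Fin.cons_zero]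
  have v2 : xb 2 = 0 := by rw [← e2, vs 0, hy0]
  have hxbX : xb ∈ X := by
    rw [hmem, v0, v2, zero_mul, zero_mul]
  -- all partial derivatives of elements of I(X) vanish at xb
  have hc0 : ∀ q ∈ vanishingIdeal K X, eval xb (pderiv (0 : Fin (m+3)) q) = 0 := by
    intro q hq
    refine line_diff_zero X q hq xb 0 (fun t => ?_)
    rw [hmem, Function.update_self, Function.update_of_ne n10, Function.update_of_ne n20,
      v1, v2, mul_zero, zero_mul]
  have hc1 : ∀ q ∈ vanishingIdeal K X, eval xb (pderiv (1 : Fin (m+3)) q) = 0 := by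
    intro q hq
    refine line_diff_zero X q hq xb 1 (fun t => ?_)
    rw [hmem, Function.update_of_ne n01, Function.update_of_ne n21, v0, v2,
      zero_mul, zero_mul]
  have hcs : ∀ j : Fin m, ∀ q ∈ vanishingIdeal K X,
      eval xb (pderiv ((j.succ.succ.succ : Fin (m+3))) q) = 0 := by
    intro j q hq
    refine line_diff_zero X q hq xb _ (fun t => ?_)
    rw [hmem, Function.update_of_ne (n0s j), Function.update_of_ne (n1s j),
      Function.update_of_ne (n2s j), v0, v2, zero_mul, zero_mul]
  -- the special curve in direction 2
  have hc2 : ∀ q ∈ vanishingIdeal K X, eval xb (pderiv (2 : Fin (m+3)) q) = 0 := by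
    intro q hq
    set σ : Fin (m+1) → Polynomial K :=
      Fin.cons Polynomial.X (fun j' : Fin m => Polynomial.C (y j'.succ)) with hσ
    have hF0 : Polynomial.eval 0 (MvPolynomial.aeval σ P) = 0 := by
      rw [eval_aeval_poly]
      have : (fun i => Polynomial.eval (0:K) (σ i)) = y := by
        funext j
        refine Fin.cases ?_ (fun j' => ?_) j <;> simp [hσ, hy0]
      rw [this, hyP]
    obtain ⟨s, hs⟩ : Polynomial.X ∣ MvPolynomial.aeval σ P := by
      rw [Polynomial.X_dvd_iff, Polynomial.coeff_zero_eq_eval_zero, hF0]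
    set γ : Fin (m+3) → Polynomial K :=
      Fin.cons (Polynomial.X * s) (Fin.cons Polynomial.X σ) with hγ
    have hγmem : ∀ t : K, (fun i => Polynomial.eval t (γ i)) ∈ X := by
      intro t
      rw [hmem]
      have g0 : Polynomial.eval t (γ 0) = t * Polynomial.eval t s := by
        simp [hγ]
      have g1 : Polynomial.eval t (γ 1) = t := by
        rw [hγ, ← e1, Fin.cons_succ, Fin.cons_zero]; simp
      have g2 : Polynomial.eval t (γ 2) = t := by
        rw [hγ, ← e2, Fin.cons_succ, Fin.cons_succ, hσ, Fin.cons_zero]; simp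
      have gy : (fun j : Fin (m+1) => Polynomial.eval t (γ j.succ.succ))
          = fun j => Polynomial.eval t (σ j) := by
        funext j; rw [hγ, Fin.cons_succ, Fin.cons_succ]
      rw [g0, g1, g2, gy, ← eval_aeval_poly, hs]
      simp; ring
    have hc := curve_diff_zero X q hq γ hγmem
    have e0 : (fun i => Polynomial.eval 0 (γ i)) = xb := by
      funext i
      refine Fin.cases ?_ (fun i' => ?_) i
      · simp [hγ, hxb]
      · refine Fin.cases ?_ (fun i'' => ?_) i'
        · simp [hγ, hxb]
        · rw [hγ, Fin.cons_succ, Fin.cons_succ, hxb, Fin.cons_succ, Fin.cons_succ]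
          refine Fin.cases ?_ (fun j' => ?_) i'' <;> simp [hσ, hy0]
    rw [e0] at hc
    rw [Fin.sum_univ_succ, Fin.sum_univ_succ, Fin.sum_univ_succ] at hc
    have d0 : Polynomial.eval 0 (Polynomial.derivative (γ 0)) = Polynomial.eval 0 s := by
      simp [hγ]
    have d1 : Polynomial.eval 0 (Polynomial.derivative (γ (Fin.succ 0))) = 1 := by
      rw [hγ, Fin.cons_succ, Fin.cons_zero]; simp
    have d2 : Polynomial.eval 0 (Polynomial.derivative (γ (Fin.succ (Fin.succ 0)))) = 1 := by
      rw [hγ, Fin.cons_succ, Fin.cons_succ, hσ, Fin.cons_zero]; simp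
    have ds : ∀ j : Fin m,
        Polynomial.eval 0 (Polynomial.derivative (γ (Fin.succ (Fin.succ (Fin.succ j))))) = 0 := by
      intro j
      rw [hγ, Fin.cons_succ, Fin.cons_succ, hσ, Fin.cons_succ]; simp
    rw [d0, d1, d2] at hc
    simp only [ds, zero_mul, Finset.sum_const_zero, add_zero] at hc
    rw [show ((0 : Fin (m+2)).succ : Fin (m+3)) = 1 from e1,
      show ((0 : Fin (m+1)).succ.succ : Fin (m+3)) = 2 from e2] at hc
    rw [hc0 q hq, hc1 q hq, mul_zero, zero_add, one_mul, one_mul, zero_add] at hc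
    exact hc
  -- hence the tangent space at xb is everything
  have htop : tangentSpaceAt (vanishingIdeal K X) xb = ⊤ := by
    rw [eq_top_iff]
    intro v _
    simp only [tangentSpaceAt, Submodule.mem_iInf, LinearMap.mem_ker]
    intro q hq
    have hall : ∀ k : Fin (m+3), eval xb (pderiv k q) = 0 := by
      intro k
      refine Fin.cases ?_ (fun k' => ?_) k
      · exact hc0 q hq
      · refine Fin.cases ?_ (fun k'' => ?_) k'
        · rw [e1]; exact hc1 q hq
        · refine Fin.cases ?_ (fun j => ?_) k''
          · rw [e2]; exact hc2 q hq
          · exact hcs j q hq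
    rw [diffAt_apply]
    simp [hall]
  -- the good (smooth) point
  set xg : Fin (m+3) → K := Fin.cons 0 (Fin.cons 1 (fun _ : Fin (m+1) => (0:K))) with hxg
  have w0 : xg 0 = 0 := by simp [hxg]
  have w1 : xg 1 = 1 := by rw [hxg, ← e1, Fin.cons_succ, Fin.cons_zero]
  have w2 : xg 2 = 0 := by rw [hxg, ← e2, Fin.cons_succ, Fin.cons_succ]
  have hxgX : xg ∈ X := by rw [hmem, w0, w2, zero_mul, zero_mul]
  -- the defining equation
  set f : MvPolynomial (Fin (m+3)) K :=
    MvPolynomial.X 0 * MvPolynomial.X 1 -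
      MvPolynomial.X 2 * rename (fun j : Fin (m+1) => (j.succ.succ : Fin (m+3))) P with hf
  have hfvan : f ∈ vanishingIdeal K X := by
    rw [mem_vanishingIdeal_iff]
    intro x hx
    rw [hmem] at hx
    show eval x f = 0
    rw [hf]
    rw [map_sub, eval_mul, eval_mul, eval_X, eval_X, eval_X, eval_rename]
    rw [sub_eq_zero]
    exact hx
  have hpd : pderiv (0 : Fin (m+3)) f = MvPolynomial.X 1 := by
    rw [hf, map_sub]
    rw [pderiv_mul, pderiv_mul, pderiv_X_self, pderiv_X_of_ne n10, pderiv_X_of_ne n20]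
    have hren : pderiv (0 : Fin (m+3))
        (rename (fun j : Fin (m+1) => (j.succ.succ : Fin (m+3))) P) = 0 := by
      apply pderiv_eq_zero_of_notMem_vars
      intro hmem0
      have := vars_rename (fun j : Fin (m+1) => (j.succ.succ : Fin (m+3))) P hmem0
      rw [Finset.mem_image] at this
      obtain ⟨j, -, hj⟩ := this
      exact Fin.succ_ne_zero _ hj
    rw [hren]
    ring
  have hdval : diffAt xg f (Pi.single (0 : Fin (m+3)) (1:K)) = 1 := by
    rw [diffAt_apply]
    rw [Finset.sum_eq_single (0 : Fin (m+3))]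
    · rw [Pi.single_eq_same, hpd, eval_X, w1, one_mul]
    · intro j _ hj; rw [Pi.single_eq_of_ne hj, zero_mul]
    · simp
  -- rank computations
  have hker : tangentSpaceAt (vanishingIdeal K X) xg ≤ LinearMap.ker (diffAt xg f) := by
    exact le_trans (iInf_le _ f) (iInf_le _ hfvan)
  have hkrank : Module.finrank K (LinearMap.ker (diffAt xg f)) = m + 2 := by
    have h := LinearMap.finrank_range_add_finrank_ker (diffAt xg f)
    rw [Module.finrank_pi, Fintype.card_fin] at h
    have hr : Module.finrank K (LinearMap.range (diffAt xg f)) = 1 := by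
      have hle : Module.finrank K (LinearMap.range (diffAt xg f)) ≤ 1 := by
        simpa using Submodule.finrank_le (LinearMap.range (diffAt xg f))
      have hnb : LinearMap.range (diffAt xg f) ≠ ⊥ := by
        intro hb
        have : diffAt xg f (Pi.single (0 : Fin (m+3)) (1:K)) = 0 := by
          have := LinearMap.range_eq_bot.mp hb
          rw [this]; rfl
        rw [hdval] at this
        exact one_ne_zero this
      have hz := (Submodule.finrank_eq_zero
        (S := LinearMap.range (diffAt xg f))).not.mpr hnb
      omega
    omega
  have hrle : Module.finrank K (tangentSpaceAt (vanishingIdeal K X) xg) ≤ m + 2 := by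
    rw [← hkrank]
    exact Submodule.finrank_mono hker
  -- contradiction via smoothness
  have h1 := hsm xb hxbX
  have h2 := hsm xg hxgX
  rw [SmoothAt, htop] at h1
  rw [SmoothAt] at h2
  rw [← h1] at h2
  have : Module.finrank K (tangentSpaceAt (vanishingIdeal K X) xg)
      = Module.finrank K (⊤ : Submodule K (Fin (m+3) → K)) := by exact_mod_cast h2
  rw [finrank_top, Module.finrank_pi, Fintype.card_fin] at this
  omega

/-- for the smooth hypersurface `X = {uv = y₁ p₁(y) ⋯ p_d(y)} ⊆ 𝔸^{n+1}`
(with `n = m + 2`, i.e. `m + 1` variables `y`), `D = ⋃_i {v = 0, p_i = 0}` and `U = X ∖ D`,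
the function `h = u/(p₁(y)⋯p_d(y)) = y₁/v` is regular on `U`, the algebra `K[U]` is
generated by the `n` functions `h, v, y₂, …, y_{n-1}`, and these functions define an
isomorphism of `U` onto the affine space `𝔸^n` (whose polynomial inverse is `G`); in
particular `U` is an affine variety. Ambient coordinates are
`(u, v, y₁, …, y_{n-1}) = (q 0, q 1, q 2, …)`. -/
theorem hypersurface_complement_affine_space
    {K : Type} [Field K] [IsAlgClosed K] [CharZero K] {m d : ℕ}
    (p : Fin d → MvPolynomial (Fin (m + 1)) K)
    (hirr : ∀ i, Irreducible (p i))
    (X : Set (Fin (m + 3) → K))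
    (hX : X = Susp (Set.univ : Set (Fin (m + 1) → K)) (MvPolynomial.X 0 * ∏ i, p i))
    (hsm : ∀ x ∈ X, SmoothAt (vanishingIdeal K X) x)
    (D : Set (Fin (m + 3) → K))
    (hD : D = {q ∈ X | q 1 = 0 ∧
      ∃ i : Fin d, eval (fun j : Fin (m + 1) => q j.succ.succ) (p i) = 0})
    (U : Set (Fin (m + 3) → K)) (hU : U = X \ D) :
    ∃ h : (Fin (m + 3) → K) → K,
      IsRegularOn U h ∧
      (∀ q ∈ U, h q * q 1 = q 2) ∧
      (∀ q ∈ U, h q * ∏ i, eval (fun j : Fin (m + 1) => q j.succ.succ) (p i) = q 0) ∧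
      (∀ φ : (Fin (m + 3) → K) → K, IsRegularOn U φ →
        ∃ P : MvPolynomial (Fin (m + 2)) K, ∀ q ∈ U, φ q = eval (coordMap h q) P) ∧
      (∃ G : Fin (m + 3) → MvPolynomial (Fin (m + 2)) K,
        (∀ w : Fin (m + 2) → K, (fun i => eval w (G i)) ∈ U) ∧
        (∀ q ∈ U, (fun i => eval (coordMap h q) (G i)) = q) ∧
        (∀ w : Fin (m + 2) → K, coordMap h (fun i => eval w (G i)) = w)) := by
  classical
  have star := star_lemma p X hX hsm
  have hmem := mem_X_iff p X hX
  set P : MvPolynomial (Fin (m+1)) K := ∏ i, p i with hP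
  set Pv : (Fin (m+3) → K) → K :=
    fun q => eval (fun j : Fin (m+1) => q j.succ.succ) P with hPv
  have hPvprod : ∀ q : Fin (m+3) → K,
      Pv q = ∏ i, eval (fun j : Fin (m+1) => q j.succ.succ) (p i) := by
    intro q; rw [hPv, hP]; exact map_prod _ _ _
  -- index facts
  have E1 : ((0 : Fin (m+2)).succ : Fin (m+3)) = 1 := by ext; simp [Fin.val_succ]
  have E2 : ((0 : Fin (m+1)).succ.succ : Fin (m+3)) = 2 := by ext; simp [Fin.val_succ]
  have E1' : ((0 : Fin (m+1)).succ : Fin (m+2)) = 1 := by ext; simp [Fin.val_succ]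
  -- membership in U
  have hUmem : ∀ q : Fin (m+3) → K, q ∈ U ↔ (q 0 * q 1 = q 2 * Pv q) ∧
      (q 1 = 0 → ∀ i, eval (fun j : Fin (m+1) => q j.succ.succ) (p i) ≠ 0) := by
    intro q
    rw [hU, Set.mem_diff, hD]
    constructor
    · rintro ⟨hqX, hqD⟩
      refine ⟨(hmem q).mp hqX, fun h1 i hi => hqD ⟨hqX, h1, i, hi⟩⟩
    · rintro ⟨hrel, hnz⟩
      refine ⟨(hmem q).mpr hrel, ?_⟩
      rintro ⟨-, h1, i, hi⟩
      exact hnz h1 i hi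
  have hUPv : ∀ q ∈ U, q 1 = 0 → Pv q ≠ 0 := by
    intro q hq h1
    rw [hPvprod]
    exact Finset.prod_ne_zero_iff.mpr fun i _ => ((hUmem q).mp hq).2 h1 i
  have hUrel : ∀ q ∈ U, q 0 * q 1 = q 2 * Pv q := fun q hq => ((hUmem q).mp hq).1
  -- the regular function h
  set h : (Fin (m+3) → K) → K :=
    fun q => if q 1 = 0 then q 0 / Pv q else q 2 / q 1 with hh
  have factA : ∀ q ∈ U, h q * q 1 = q 2 := by
    intro q hq
    by_cases h1 : q 1 = 0
    · have hrel := hUrel q hq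
      rw [h1, mul_zero] at hrel
      have h2 : q 2 = 0 := by
        rcases mul_eq_zero.mp hrel.symm with h' | h'
        · exact h'
        · exact absurd h' (hUPv q hq h1)
      rw [h1, mul_zero, h2]
    · rw [hh]
      simp only [if_neg h1]
      field_simp
  have factB : ∀ q ∈ U, h q * Pv q = q 0 := by
    intro q hq
    by_cases h1 : q 1 = 0
    · rw [hh]
      simp only [if_pos h1]
      exact div_mul_cancel₀ _ (hUPv q hq h1)
    · rw [hh]
      simp only [if_neg h1]
      rw [div_mul_eq_mul_div, ← hUrel q hq, mul_div_cancel_right₀ _ h1]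
  -- the inverse map G
  set σ' : Fin (m+1) → MvPolynomial (Fin (m+2)) K :=
    Fin.cons (MvPolynomial.X 0 * MvPolynomial.X 1)
      (fun j : Fin m => MvPolynomial.X j.succ.succ) with hσ'
  set G : Fin (m+3) → MvPolynomial (Fin (m+2)) K :=
    Fin.cons (MvPolynomial.X 0 * MvPolynomial.aeval σ' P)
      (Fin.cons (MvPolynomial.X 1) σ') with hG
  set Gm : (Fin (m+2) → K) → (Fin (m+3) → K) := fun w => fun i => eval w (G i) with hGm
  have g0 : ∀ w, Gm w 0 = w 0 * eval w (MvPolynomial.aeval σ' P) := by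
    intro w; rw [hGm]; simp only [hG, Fin.cons_zero, eval_mul, eval_X]
  have g1 : ∀ w, Gm w 1 = w 1 := by
    intro w; rw [hGm]
    simp only [hG, ← E1, Fin.cons_succ, Fin.cons_zero, eval_X]
  have gy : ∀ w (j : Fin (m+1)), Gm w j.succ.succ = eval w (σ' j) := by
    intro w j; rw [hGm]; simp only [hG, Fin.cons_succ]
  have σ'0 : ∀ w : Fin (m+2) → K, eval w (σ' 0) = w 0 * w 1 := by
    intro w; simp only [hσ', Fin.cons_zero, eval_mul, eval_X]
  have σ's : ∀ (w : Fin (m+2) → K) (j : Fin m), eval w (σ' j.succ) = w j.succ.succ := by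
    intro w j; simp only [hσ', Fin.cons_succ, eval_X]
  have g2 : ∀ w, Gm w 2 = w 0 * w 1 := by
    intro w; rw [← E2, gy, σ'0]
  have hPvG : ∀ w, Pv (Gm w) = eval w (MvPolynomial.aeval σ' P) := by
    intro w
    have e : (fun j : Fin (m+1) => Gm w j.succ.succ) = (fun i => eval w (σ' i)) := by
      funext j; rw [gy]
    simp only [hPv]
    rw [e, ← eval_aeval_mv]
  have hGU : ∀ w, Gm w ∈ U := by
    intro w
    rw [hUmem]
    constructor
    · rw [g0, g1, g2, hPvG]; ring
    · intro h1 i hi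
      rw [g1] at h1
      refine star (fun j => Gm w j.succ.succ) ?_ ?_
      · show Gm w ((0 : Fin (m+1)).succ.succ) = 0
        rw [gy, σ'0, h1, mul_zero]
      · show Pv (Gm w) = 0
        rw [hPvprod]
        exact Finset.prod_eq_zero (Finset.mem_univ i) hi
  have hGinvL : ∀ q ∈ U, (fun i => eval (coordMap h q) (G i)) = q := by
    intro q hq
    have wc0 : coordMap h q 0 = h q := rfl
    have wc1 : coordMap h q 1 = q 1 := by
      rw [coordMap, ← E1', Fin.cons_succ, Fin.cons_zero]
    have wcs : ∀ j : Fin m, coordMap h q j.succ.succ = q j.succ.succ.succ := by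
      intro j; rw [coordMap, Fin.cons_succ, Fin.cons_succ]
    have hyw : (fun j : Fin (m+1) => eval (coordMap h q) (σ' j))
        = fun j : Fin (m+1) => q j.succ.succ := by
      funext j
      refine Fin.cases ?_ (fun j' => ?_) j
      · rw [σ'0, wc0, wc1, factA q hq, E2]
      · rw [σ's, wcs]
    funext i
    refine Fin.cases ?_ (fun i' => ?_) i
    · show Gm (coordMap h q) 0 = q 0
      rw [g0, wc0, eval_aeval_mv]
      have e' : (fun i => eval (coordMap h q) (σ' i)) = fun j : Fin (m+1) => q j.succ.succ := hyw
      rw [e']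
      exact factB q hq
    · refine Fin.cases ?_ (fun j => ?_) i'
      · show Gm (coordMap h q) ((0 : Fin (m+2)).succ) = q ((0 : Fin (m+2)).succ)
        rw [E1, g1, wc1]
      · show Gm (coordMap h q) (j.succ.succ) = q (j.succ.succ)
        rw [gy]
        exact congrFun hyw j
  have hGinvR : ∀ w : Fin (m+2) → K, coordMap h (Gm w) = w := by
    intro w
    funext i
    refine Fin.cases ?_ (fun i' => ?_) i
    · show h (Gm w) = w 0
      by_cases h1 : w 1 = 0
      · have hq1 : Gm w 1 = 0 := by rw [g1, h1]
        rw [hh]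
        simp only [if_pos hq1]
        rw [g0, ← hPvG]
        exact mul_div_cancel_right₀ _ (hUPv (Gm w) (hGU w) hq1)
      · have hq1 : Gm w 1 ≠ 0 := by rw [g1]; exact h1
        rw [hh]
        simp only [if_neg hq1]
        rw [g2, g1]
        exact mul_div_cancel_right₀ _ h1
    · refine Fin.cases ?_ (fun j => ?_) i'
      · show Gm w 1 = w ((0 : Fin (m+1)).succ)
        rw [E1', g1]
      · show Gm w j.succ.succ.succ = w j.succ.succ
        have : (Gm w) ((j.succ : Fin (m+1)).succ.succ) = eval w (σ' j.succ) := gy w j.succ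
        rw [this, σ's]
  refine ⟨h, ?_, factA, ?_, ?_, G, hGU, hGinvL, hGinvR⟩
  · -- regularity
    intro q hq
    by_cases h1 : q 1 = 0
    · refine ⟨MvPolynomial.X 0,
        rename (fun j : Fin (m+1) => (j.succ.succ : Fin (m+3))) P, ?_, ?_⟩
      · rw [eval_rename]
        exact hUPv q hq h1
      · intro q' hq' _
        rw [eval_rename, eval_X]
        have : (q' ∘ fun j : Fin (m+1) => (j.succ.succ : Fin (m+3)))
            = fun j : Fin (m+1) => q' j.succ.succ := rfl
        rw [this]
        exact factB q' hq'
    · refine ⟨MvPolynomial.X 2, MvPolynomial.X 1, by rwa [eval_X], ?_⟩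
      intro q' hq' _
      rw [eval_X, eval_X]
      exact factA q' hq'
  · -- h * prod = q 0
    intro q hq
    rw [← hPvprod]
    exact factB q hq
  · -- generation
    intro φ hφ
    set ψ : (Fin (m+2) → K) → K := fun w => φ (Gm w) with hψ
    have hloc : ∀ w : Fin (m+2) → K, ∃ a b : MvPolynomial (Fin (m+2)) K,
        eval w b ≠ 0 ∧ ∀ w', ψ w' * eval w' b = eval w' a := by
      intro w
      obtain ⟨a, b, hb, hab⟩ := hφ (Gm w) (hGU w)
      refine ⟨MvPolynomial.aeval G a * MvPolynomial.aeval G b,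
        (MvPolynomial.aeval G b) ^ 2, ?_, ?_⟩
      · rw [map_pow, eval_aeval_mv]
        exact pow_ne_zero _ hb
      · intro w'
        by_cases hz : eval (Gm w') b = 0
        · rw [map_pow, eval_aeval_mv, eval_mul, eval_aeval_mv, eval_aeval_mv]
          show ψ w' * (eval (Gm w') b) ^ 2 = eval (Gm w') a * eval (Gm w') b
          rw [hz]; ring
        · have key := hab (Gm w') (hGU w') hz
          rw [map_pow, eval_aeval_mv, eval_mul, eval_aeval_mv, eval_aeval_mv]
          show ψ w' * (eval (Gm w') b) ^ 2 = eval (Gm w') a * eval (Gm w') b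
          rw [pow_two, ← mul_assoc,
            show ψ w' = φ (Gm w') from rfl, key]
    choose A B hB hAB using hloc
    have hJtop : Ideal.span (Set.range B) = ⊤ := by
      have hzl : MvPolynomial.zeroLocus K (Ideal.span (Set.range B)) = ∅ := by
        rw [Set.eq_empty_iff_forall_notMem]
        intro x hx
        exact hB x (hx (B x) (Ideal.subset_span (Set.mem_range_self x)))
      have hrad := vanishingIdeal_zeroLocus_eq_radical (K := K) (Ideal.span (Set.range B))
      rw [hzl, vanishingIdeal_empty] at hrad
      exact Ideal.radical_eq_top.mp hrad.symm
    have hone : (1 : MvPolynomial (Fin (m+2)) K) ∈ Ideal.span (Set.range B) := by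
      rw [hJtop]; exact Submodule.mem_top
    obtain ⟨c, hsupp, hsum⟩ := Submodule.mem_span_set.mp hone
    set A' : MvPolynomial (Fin (m+2)) K → MvPolynomial (Fin (m+2)) K :=
      fun b => if hb : ∃ w, B w = b then A (Classical.choose hb) else 0 with hA'
    have hA'key : ∀ b, (∃ w, B w = b) → ∀ w', ψ w' * eval w' b = eval w' (A' b) := by
      intro b hb w'
      rw [hA']
      simp only [dif_pos hb]
      have := hAB (Classical.choose hb) w'
      rwa [Classical.choose_spec hb] at this
    refine ⟨∑ b ∈ c.support, c b * A' b, ?_⟩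
    intro q hq
    have hφψ : φ q = ψ (coordMap h q) := by
      show φ q = φ (fun i => eval (coordMap h q) (G i))
      rw [hGinvL q hq]
    rw [hφψ]
    set w' := coordMap h q
    have hsum' : ∑ b ∈ c.support, c b * b = 1 := by
      rw [← hsum, Finsupp.sum]
      exact Finset.sum_congr rfl fun b _ => by rw [smul_eq_mul, mul_comm]
    calc ψ w' = ψ w' * eval w' (∑ b ∈ c.support, c b * b) := by rw [hsum']; simp
      _ = ∑ b ∈ c.support, eval w' (c b) * (ψ w' * eval w' b) := by
          rw [map_sum, Finset.mul_sum]
          exact Finset.sum_congr rfl fun b _ => by rw [eval_mul]; ring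
      _ = ∑ b ∈ c.support, eval w' (c b) * eval w' (A' b) := by
          refine Finset.sum_congr rfl fun b hb => ?_
          have hbS : ∃ w, B w = b := hsupp hb
          rw [hA'key b hbS w']
      _ = eval w' (∑ b ∈ c.support, c b * A' b) := by
          rw [map_sum]
          exact Finset.sum_congr rfl fun b _ => by rw [eval_mul]


end ArzhZai
end
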